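/- For every integer m ≥ 2 and every ε > 0, with ω₀ = 1 + ε/m², the quantity α_m(ε) = T_m(ω₀)T_m''(ω₀)/T_m'(ω₀)² satisfies (1/3)·(m² − 1)/m² < α_m(ε) < (1/tanh(√(2ε)))·(1/tanh(√(2ε)) − 1/√(2ε)). -/

import Mathlib

set_option linter.unusedTactic false
set_option maxHeartbeats 1000000
open Real
private lemma pos_of_deriv (f f' : ℝ → ℝ) (hd : ∀ x, HasDerivAt f (f' x) x)
    (h0 : f 0 = 0) (hf' : ∀ x, 0 < x → 0 < f' x) : ∀ x, 0 < x → 0 < f x := by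
  intro x hx
  have hmono : StrictMonoOn f (Set.Ici 0) := by
    refine strictMonoOn_of_deriv_pos (convex_Ici 0)
      (fun y _ => (hd y).differentiableAt.continuousAt.continuousWithinAt) ?_
    intro y hy
    rw [interior_Ici, Set.mem_Ioi] at hy
    rw [(hd y).deriv]
    exact hf' y hy
  have := hmono Set.self_mem_Ici (Set.mem_Ici.2 hx.le) hx
  rwa [h0] at this

private lemma nonneg_of_deriv (f f' : ℝ → ℝ) (hd : ∀ x, HasDerivAt f (f' x) x)
    (h0 : f 0 = 0) (hf' : ∀ x, 0 ≤ x → 0 ≤ f' x) : ∀ x, 0 ≤ x → 0 ≤ f x := by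
  intro x hx
  have hmono : MonotoneOn f (Set.Ici 0) := by
    refine monotoneOn_of_deriv_nonneg (convex_Ici 0)
      (fun y _ => (hd y).differentiableAt.continuousAt.continuousWithinAt)
      (fun y _ => (hd y).differentiableAt.differentiableWithinAt) ?_
    intro y hy
    rw [interior_Ici, Set.mem_Ioi] at hy
    rw [(hd y).deriv]
    exact hf' y hy.le
  have := hmono Set.self_mem_Ici (Set.mem_Ici.2 hx) hx
  rwa [h0] at this

-- sinh t < t cosh t
private lemma lem_phi : ∀ x, 0 < x → 0 < x * Real.cosh x - Real.sinh x := by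
  apply pos_of_deriv _ (fun x => x * Real.sinh x)
  · intro x
    have h := ((hasDerivAt_id x).mul (Real.hasDerivAt_cosh x)).sub (Real.hasDerivAt_sinh x)
    exact h.congr_deriv (by simp)
  · simp
  · intro x hx
    exact mul_pos hx (by rwa [Real.sinh_pos_iff])

-- cosh t ≥ 1 + t^2/2
private lemma lem_coshquad : ∀ x, 0 < x → 0 < Real.cosh x - 1 - x ^ 2 / 2 := by
  apply pos_of_deriv _ (fun x => Real.sinh x - x)
  · intro x
    have h := ((Real.hasDerivAt_cosh x).sub_const 1).sub
      ((hasDerivAt_pow 2 x).div_const 2)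
    refine h.congr_deriv ?_
    (try simp only [id_eq, Pi.add_apply, Pi.sub_apply, Pi.mul_apply]); try ring
  · simp
  · intro x hx
    have := Real.self_lt_sinh_iff.2 hx
    linarith

-- coth t < 1/t + t/3 in cleared form : t*cosh t < (t^2/3+1)*sinh t
private lemma lem_psi : ∀ x, 0 < x → 0 < (x ^ 2 / 3 + 1) * Real.sinh x - x * Real.cosh x := by
  apply pos_of_deriv _ (fun x => x ^ 2 / 3 * Real.cosh x - x / 3 * Real.sinh x)
  · intro x
    have h := ((((hasDerivAt_pow 2 x).div_const 3).add_const 1).mul (Real.hasDerivAt_sinh x)).sub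
      ((hasDerivAt_id x).mul (Real.hasDerivAt_cosh x))
    refine h.congr_deriv ?_
    (try simp only [id_eq, Pi.add_apply, Pi.sub_apply, Pi.mul_apply]); try ring
  · simp
  · intro x hx
    have h := lem_phi x hx
    have : x ^ 2 / 3 * Real.cosh x - x / 3 * Real.sinh x
        = x / 3 * (x * Real.cosh x - Real.sinh x) := by ring
    rw [this]
    exact mul_pos (by linarith) h

-- coth u > 1/u + u/3 - u^3/45 in cleared form
private lemma lem_chi : ∀ x, 0 < x →
    0 < 45 * x * Real.cosh x - (45 + 15 * x ^ 2 - x ^ 4) * Real.sinh x := by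
  have h5 : ∀ x, 0 < x →
      0 < (x ^ 4 + 105 * x ^ 2) * Real.cosh x + (20 * x ^ 3 + 135 * x) * Real.sinh x := by
    intro x hx
    have hc : (0:ℝ) < Real.cosh x := Real.cosh_pos x
    have hs : (0:ℝ) < Real.sinh x := Real.sinh_pos_iff.2 hx
    have h1 : (0:ℝ) < x ^ 4 + 105 * x ^ 2 := by positivity
    have h2 : (0:ℝ) < 20 * x ^ 3 + 135 * x := by positivity
    nlinarith [mul_pos h1 hc, mul_pos h2 hs]
  have h4 : ∀ x, 0 < x →
      0 < (16 * x ^ 3 + 21 * x) * Real.cosh x + (x ^ 4 + 57 * x ^ 2 - 21) * Real.sinh x := by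
    apply pos_of_deriv _ (fun x => (x ^ 4 + 105 * x ^ 2) * Real.cosh x
      + (20 * x ^ 3 + 135 * x) * Real.sinh x) _ (by simp) h5
    intro x
    have h := ((((hasDerivAt_pow 3 x).const_mul 16).add ((hasDerivAt_id x).const_mul 21)).mul
        (Real.hasDerivAt_cosh x)).add
      ((((hasDerivAt_pow 4 x).add ((hasDerivAt_pow 2 x).const_mul 57)).sub_const 21).mul
        (Real.hasDerivAt_sinh x))
    refine h.congr_deriv ?_
    (try simp only [id_eq, Pi.add_apply, Pi.sub_apply, Pi.mul_apply]); try ring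
  have h3 : ∀ x, 0 < x →
      0 < (x ^ 4 + 21 * x ^ 2) * Real.cosh x + (12 * x ^ 3 - 21 * x) * Real.sinh x := by
    apply pos_of_deriv _ (fun x => (16 * x ^ 3 + 21 * x) * Real.cosh x
      + (x ^ 4 + 57 * x ^ 2 - 21) * Real.sinh x) _ (by simp) h4
    intro x
    have h := (((hasDerivAt_pow 4 x).add ((hasDerivAt_pow 2 x).const_mul 21)).mul
        (Real.hasDerivAt_cosh x)).add
      ((((hasDerivAt_pow 3 x).const_mul 12).sub ((hasDerivAt_id x).const_mul 21)).mul
        (Real.hasDerivAt_sinh x))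
    refine h.congr_deriv ?_
    (try simp only [id_eq, Pi.add_apply, Pi.sub_apply, Pi.mul_apply]); try ring
  have h2 : ∀ x, 0 < x →
      0 < (8 * x ^ 3 - 15 * x) * Real.cosh x + (x ^ 4 - 3 * x ^ 2 + 15) * Real.sinh x := by
    apply pos_of_deriv _ (fun x => (x ^ 4 + 21 * x ^ 2) * Real.cosh x
      + (12 * x ^ 3 - 21 * x) * Real.sinh x) _ (by simp) h3
    intro x
    have h := ((((hasDerivAt_pow 3 x).const_mul 8).sub ((hasDerivAt_id x).const_mul 15)).mul
        (Real.hasDerivAt_cosh x)).add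
      (((((hasDerivAt_pow 4 x).sub ((hasDerivAt_pow 2 x).const_mul 3)).add_const 15)).mul
        (Real.hasDerivAt_sinh x))
    refine h.congr_deriv ?_
    (try simp only [id_eq, Pi.add_apply, Pi.sub_apply, Pi.mul_apply]); try ring
  have h1 : ∀ x, 0 < x →
      0 < (x ^ 4 - 15 * x ^ 2) * Real.cosh x + (4 * x ^ 3 + 15 * x) * Real.sinh x := by
    apply pos_of_deriv _ (fun x => (8 * x ^ 3 - 15 * x) * Real.cosh x
      + (x ^ 4 - 3 * x ^ 2 + 15) * Real.sinh x) _ (by simp) h2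
    intro x
    have h := (((hasDerivAt_pow 4 x).sub ((hasDerivAt_pow 2 x).const_mul 15)).mul
        (Real.hasDerivAt_cosh x)).add
      ((((hasDerivAt_pow 3 x).const_mul 4).add ((hasDerivAt_id x).const_mul 15)).mul
        (Real.hasDerivAt_sinh x))
    refine h.congr_deriv ?_
    (try simp only [id_eq, Pi.add_apply, Pi.sub_apply, Pi.mul_apply]); try ring
  apply pos_of_deriv _ (fun x => (x ^ 4 - 15 * x ^ 2) * Real.cosh x
    + (4 * x ^ 3 + 15 * x) * Real.sinh x) _ (by simp) h1
  intro x
  have h := (((hasDerivAt_id x).const_mul 45).mul (Real.hasDerivAt_cosh x)).sub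
    ((((hasDerivAt_pow 2 x).const_mul 15).const_add 45 |>.sub (hasDerivAt_pow 4 x)).mul
      (Real.hasDerivAt_sinh x))
  refine h.congr_deriv ?_
  (try simp only [id_eq, Pi.add_apply, Pi.sub_apply, Pi.mul_apply]); try ring

-- the key positivity for upper bound: (cosh v - 1)(v + sinh v) - v^2 sinh v > 0
private lemma lem_g0 : ∀ x, 0 < x →
    0 < (Real.cosh x - 1) * (x + Real.sinh x) - x ^ 2 * Real.sinh x := by
  have h7 : ∀ x, 0 < x → 0 < 64 * Real.cosh x ^ 2 + 64 * Real.sinh x ^ 2 - 36 * Real.cosh x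
      - 13 * x * Real.sinh x - x ^ 2 * Real.cosh x := by
    intro x hx
    have hc : (1:ℝ) ≤ Real.cosh x := Real.one_le_cosh x
    have hs : (0:ℝ) < Real.sinh x := Real.sinh_pos_iff.2 hx
    have hsx : x ≤ Real.sinh x := (Real.self_le_sinh_iff).2 hx.le
    have hq := lem_coshquad x hx
    have hid : Real.cosh x ^ 2 = Real.sinh x ^ 2 + 1 := Real.cosh_sq x
    have h1 : x * Real.sinh x ≤ Real.sinh x * Real.sinh x :=
      mul_le_mul_of_nonneg_right hsx hs.le
    have h2 : x ^ 2 * Real.cosh x ≤ (2 * Real.cosh x - 2) * Real.cosh x := by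
      have : x ^ 2 ≤ 2 * Real.cosh x - 2 := by nlinarith
      exact mul_le_mul_of_nonneg_right this (by linarith)
    nlinarith
  have h6 : ∀ x, 0 < x → 0 < 64 * Real.sinh x * Real.cosh x - 25 * Real.sinh x
      - 11 * x * Real.cosh x - x ^ 2 * Real.sinh x := by
    apply pos_of_deriv _ (fun x => 64 * Real.cosh x ^ 2 + 64 * Real.sinh x ^ 2
      - 36 * Real.cosh x - 13 * x * Real.sinh x - x ^ 2 * Real.cosh x) _ (by norm_num) h7
    intro x
    have h := (((((Real.hasDerivAt_sinh x).const_mul 64).mul (Real.hasDerivAt_cosh x)).sub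
        ((Real.hasDerivAt_sinh x).const_mul 25)).sub
        (((hasDerivAt_id x).const_mul 11).mul (Real.hasDerivAt_cosh x))).sub
      ((hasDerivAt_pow 2 x).mul (Real.hasDerivAt_sinh x))
    refine h.congr_deriv ?_
    (try simp only [id_eq, Pi.add_apply, Pi.sub_apply, Pi.mul_apply]); try ring
  have h5 : ∀ x, 0 < x → 0 < 16 * Real.cosh x ^ 2 + 16 * Real.sinh x ^ 2 - 16 * Real.cosh x
      - 9 * x * Real.sinh x - x ^ 2 * Real.cosh x := by
    apply pos_of_deriv _ (fun x => 64 * Real.sinh x * Real.cosh x - 25 * Real.sinh x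
      - 11 * x * Real.cosh x - x ^ 2 * Real.sinh x) _ (by norm_num) h6
    intro x
    have h := ((((((Real.hasDerivAt_cosh x).pow 2).const_mul 16).add
        (((Real.hasDerivAt_sinh x).pow 2).const_mul 16)).sub
        ((Real.hasDerivAt_cosh x).const_mul 16)).sub
      (((hasDerivAt_id x).const_mul 9).mul (Real.hasDerivAt_sinh x))).sub
      ((hasDerivAt_pow 2 x).mul (Real.hasDerivAt_cosh x))
    refine h.congr_deriv ?_
    (try simp only [id_eq, Pi.add_apply, Pi.sub_apply, Pi.mul_apply]); try ring
  have h4 : ∀ x, 0 < x → 0 < 16 * Real.sinh x * Real.cosh x - 9 * Real.sinh x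
      - 7 * x * Real.cosh x - x ^ 2 * Real.sinh x := by
    apply pos_of_deriv _ (fun x => 16 * Real.cosh x ^ 2 + 16 * Real.sinh x ^ 2
      - 16 * Real.cosh x - 9 * x * Real.sinh x - x ^ 2 * Real.cosh x) _ (by norm_num) h5
    intro x
    have h := (((((Real.hasDerivAt_sinh x).const_mul 16).mul (Real.hasDerivAt_cosh x)).sub
        ((Real.hasDerivAt_sinh x).const_mul 9)).sub
        (((hasDerivAt_id x).const_mul 7).mul (Real.hasDerivAt_cosh x))).sub
      ((hasDerivAt_pow 2 x).mul (Real.hasDerivAt_sinh x))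
    refine h.congr_deriv ?_
    (try simp only [id_eq, Pi.add_apply, Pi.sub_apply, Pi.mul_apply]); try ring
  have h3 : ∀ x, 0 < x → 0 < 4 * Real.cosh x ^ 2 + 4 * Real.sinh x ^ 2 - 4 * Real.cosh x
      - 5 * x * Real.sinh x - x ^ 2 * Real.cosh x := by
    apply pos_of_deriv _ (fun x => 16 * Real.sinh x * Real.cosh x - 9 * Real.sinh x
      - 7 * x * Real.cosh x - x ^ 2 * Real.sinh x) _ (by norm_num) h4
    intro x
    have h := ((((((Real.hasDerivAt_cosh x).pow 2).const_mul 4).add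
        (((Real.hasDerivAt_sinh x).pow 2).const_mul 4)).sub
        ((Real.hasDerivAt_cosh x).const_mul 4)).sub
      (((hasDerivAt_id x).const_mul 5).mul (Real.hasDerivAt_sinh x))).sub
      ((hasDerivAt_pow 2 x).mul (Real.hasDerivAt_cosh x))
    refine h.congr_deriv ?_
    (try simp only [id_eq, Pi.add_apply, Pi.sub_apply, Pi.mul_apply]); try ring
  have h2 : ∀ x, 0 < x → 0 < 4 * Real.sinh x * Real.cosh x - Real.sinh x
      - 3 * x * Real.cosh x - x ^ 2 * Real.sinh x := by
    apply pos_of_deriv _ (fun x => 4 * Real.cosh x ^ 2 + 4 * Real.sinh x ^ 2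
      - 4 * Real.cosh x - 5 * x * Real.sinh x - x ^ 2 * Real.cosh x) _ (by norm_num) h3
    intro x
    have h := (((((Real.hasDerivAt_sinh x).const_mul 4).mul (Real.hasDerivAt_cosh x)).sub
        (Real.hasDerivAt_sinh x)).sub
        (((hasDerivAt_id x).const_mul 3).mul (Real.hasDerivAt_cosh x))).sub
      ((hasDerivAt_pow 2 x).mul (Real.hasDerivAt_sinh x))
    refine h.congr_deriv ?_
    (try simp only [id_eq, Pi.add_apply, Pi.sub_apply, Pi.mul_apply]); try ring
  have h1 : ∀ x, 0 < x → 0 < Real.cosh x ^ 2 + Real.sinh x ^ 2 - 1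
      - x * Real.sinh x - x ^ 2 * Real.cosh x := by
    apply pos_of_deriv _ (fun x => 4 * Real.sinh x * Real.cosh x - Real.sinh x
      - 3 * x * Real.cosh x - x ^ 2 * Real.sinh x) _ (by norm_num) h2
    intro x
    have h := (((((Real.hasDerivAt_cosh x).pow 2).add
        ((Real.hasDerivAt_sinh x).pow 2)).sub_const 1).sub
        ((hasDerivAt_id x).mul (Real.hasDerivAt_sinh x))).sub
      ((hasDerivAt_pow 2 x).mul (Real.hasDerivAt_cosh x))
    refine h.congr_deriv ?_
    (try simp only [id_eq, Pi.add_apply, Pi.sub_apply, Pi.mul_apply]); try ring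
  apply pos_of_deriv _ (fun x => Real.cosh x ^ 2 + Real.sinh x ^ 2 - 1
    - x * Real.sinh x - x ^ 2 * Real.cosh x) _ (by norm_num) h1
  intro x
  have h := (((Real.hasDerivAt_cosh x).sub_const 1).mul
      ((hasDerivAt_id x).add (Real.hasDerivAt_sinh x))).sub
    ((hasDerivAt_pow 2 x).mul (Real.hasDerivAt_sinh x))
  refine h.congr_deriv ?_
  (try simp only [id_eq, Pi.add_apply, Pi.sub_apply, Pi.mul_apply]); try ring

private lemma lem_F_hasDeriv {x : ℝ} (hx : 0 < x) :
    HasDerivAt (fun w => (w * Real.cosh w ^ 2 - Real.sinh w * Real.cosh w) / (w * Real.sinh w ^ 2))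
      (((2 * x * Real.cosh x * Real.sinh x - Real.sinh x ^ 2) * (x * Real.sinh x ^ 2)
          - (x * Real.cosh x ^ 2 - Real.sinh x * Real.cosh x)
            * (Real.sinh x ^ 2 + 2 * x * Real.sinh x * Real.cosh x))
        / (x * Real.sinh x ^ 2) ^ 2) x := by
  have hs : Real.sinh x ≠ 0 := by
    simp only [ne_eq, Real.sinh_eq_zero]; exact hx.ne'
  have hD : x * Real.sinh x ^ 2 ≠ 0 := by positivity
  have hN : HasDerivAt (fun w => w * Real.cosh w ^ 2 - Real.sinh w * Real.cosh w)
      (2 * x * Real.cosh x * Real.sinh x - Real.sinh x ^ 2) x := by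
    have h := ((hasDerivAt_id' x).mul ((Real.hasDerivAt_cosh x).pow 2)).sub
      ((Real.hasDerivAt_sinh x).mul (Real.hasDerivAt_cosh x))
    refine h.congr_deriv ?_
    simp only [Pi.pow_apply]
    push_cast
    ring
  have hDd : HasDerivAt (fun w => w * Real.sinh w ^ 2)
      (Real.sinh x ^ 2 + 2 * x * Real.sinh x * Real.cosh x) x := by
    have h := (hasDerivAt_id' x).mul ((Real.hasDerivAt_sinh x).pow 2)
    refine h.congr_deriv ?_
    simp only [Pi.pow_apply]
    push_cast; ring
  exact hN.div hDd hD

private lemma lem_F_mono {u s : ℝ} (hu : 0 < u) (hus : u < s) :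
    (u * Real.cosh u ^ 2 - Real.sinh u * Real.cosh u) / (u * Real.sinh u ^ 2) <
    (s * Real.cosh s ^ 2 - Real.sinh s * Real.cosh s) / (s * Real.sinh s ^ 2) := by
  have key : StrictMonoOn
      (fun w => (w * Real.cosh w ^ 2 - Real.sinh w * Real.cosh w) / (w * Real.sinh w ^ 2))
      (Set.Ioi 0) := by
    refine strictMonoOn_of_deriv_pos (convex_Ioi 0)
      (fun y hy => ((lem_F_hasDeriv hy).differentiableAt.continuousAt).continuousWithinAt) ?_
    intro y hy
    rw [interior_Ioi, Set.mem_Ioi] at hy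
    rw [(lem_F_hasDeriv hy).deriv]
    have hg := lem_g0 (2 * y) (by linarith)
    rw [Real.cosh_two_mul, Real.sinh_two_mul] at hg
    set c := Real.cosh y
    set s := Real.sinh y
    have hspos : 0 < s := Real.sinh_pos_iff.2 hy
    have hid : c ^ 2 = s ^ 2 + 1 := Real.cosh_sq y
    apply div_pos _ (by positivity)
    have hkey : 4 * ((2 * y * c * s - s ^ 2) * (y * s ^ 2)
        - (y * c ^ 2 - s * c) * (s ^ 2 + 2 * y * s * c))
        = (c ^ 2 + s ^ 2 - 1) * (2 * y + 2 * s * c) - (2 * y) ^ 2 * (2 * s * c) := by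
      linear_combination (-8 * y ^ 2 * c * s - 2 * c * s + 4 * y * s ^ 2 - 2 * y) * hid
    linarith [hg, hkey]
  exact key (Set.mem_Ioi.2 hu) (Set.mem_Ioi.2 (hu.trans hus)) hus

private lemma coth1_bound : 25 * Real.cosh 1 ≤ 33 * Real.sinh 1 := by
  rw [Real.cosh_eq, Real.sinh_eq]
  have he : Real.exp 1 * Real.exp (-1) = 1 := by
    rw [← Real.exp_add]; norm_num
  nlinarith [Real.exp_one_gt_d9, Real.exp_pos (-1), Real.exp_pos 1]

private lemma lem_lower {M t : ℝ} (hM : 2 ≤ M) (ht : 0 < t) :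
    1 / 3 * (M ^ 2 - 1) / M ^ 2 <
      (Real.cosh (M * t) / Real.sinh (M * t)) ^ 2
        - (Real.cosh (M * t) / Real.sinh (M * t)) * (Real.cosh t / Real.sinh t) / M := by
  have hM0 : (0:ℝ) < M := by linarith
  have hu0 : 0 < M * t := mul_pos hM0 ht
  set u := M * t with hu
  set A := Real.cosh u / Real.sinh u with hA
  set B := Real.cosh t / Real.sinh t with hB
  have hsu : 0 < Real.sinh u := Real.sinh_pos_iff.2 hu0
  have hst : 0 < Real.sinh t := Real.sinh_pos_iff.2 ht
  have hA1 : 1 < A := by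
    rw [hA, lt_div_iff₀ hsu, one_mul]
    have := Real.cosh_sub_sinh u
    have := Real.exp_pos (-u)
    linarith
  have hB1 : 1 < B := by
    rw [hB, lt_div_iff₀ hst, one_mul]
    have := Real.cosh_sub_sinh t
    have := Real.exp_pos (-t)
    linarith
  have hBs : B * Real.sinh t = Real.cosh t := by
    rw [hB]; field_simp
  have hAs : A * Real.sinh u = Real.cosh u := by
    rw [hA]; field_simp
  clear_value u A B
  -- cleared bound : t * B < t^2/3 + 1
  have hBt : t * B < t ^ 2 / 3 + 1 := by
    have hp := lem_psi t ht
    have h2 : t * B * Real.sinh t < (t ^ 2 / 3 + 1) * Real.sinh t := by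
      rw [mul_assoc, hBs]; linarith
    exact lt_of_mul_lt_mul_right h2 hst.le
  -- transform the goal
  rw [div_lt_iff₀ (by positivity : (0:ℝ) < M ^ 2)]
  have hexp : (A ^ 2 - A * B / M) * M ^ 2 = A ^ 2 * M ^ 2 - A * B * M := by
    field_simp
  rw [hexp]
  have key : M ^ 2 - 1 < 3 * (A ^ 2 * M ^ 2) - 3 * (A * B * M) := by
    rcases le_or_gt 1 t with ht1 | ht1
    · -- case t ≥ 1 : B ≤ 33/25
      have hcs : Real.cosh t * Real.sinh 1 ≤ Real.cosh 1 * Real.sinh t := by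
        have hss := Real.sinh_sub t 1
        have hnn : 0 ≤ Real.sinh (t - 1) := Real.sinh_nonneg_iff.2 (by linarith)
        nlinarith [Real.cosh_pos 1, Real.cosh_pos t]
      have hs1 : 0 < Real.sinh 1 := Real.sinh_pos_iff.2 one_pos
      have hB33 : B ≤ 33 / 25 := by
        have h1 : B * Real.sinh 1 * Real.sinh t ≤ Real.cosh 1 * Real.sinh t := by
          calc B * Real.sinh 1 * Real.sinh t = B * Real.sinh t * Real.sinh 1 := by ring
          _ = Real.cosh t * Real.sinh 1 := by rw [hBs]
          _ ≤ Real.cosh 1 * Real.sinh t := hcs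
        have h1' : B * Real.sinh 1 ≤ Real.cosh 1 := le_of_mul_le_mul_right h1 hst
        have h2 : 25 * Real.cosh 1 ≤ 33 * Real.sinh 1 := coth1_bound
        have h3 : B * (25 * Real.sinh 1) ≤ (33 / 25) * (25 * Real.sinh 1) := by nlinarith
        exact le_of_mul_le_mul_right h3 (by positivity)
      have hzM : M < A * M := by nlinarith
      nlinarith [sq_nonneg (A * M - 2), mul_nonneg (by linarith : (0:ℝ) ≤ 33 / 25 - B)
        (by nlinarith : (0:ℝ) ≤ 3 * (A * M)), mul_pos hM0 hM0]
    · -- case t < 1, so u < M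
      have huM : u < M := by rw [hu]; nlinarith
      have hBu : 3 * M * A * B * u < A * (3 * M ^ 2 + u ^ 2) := by
        have h1 : 3 * M ^ 2 * (t * B) < 3 * M ^ 2 * (t ^ 2 / 3 + 1) :=
          (mul_lt_mul_iff_right₀ (by positivity)).2 hBt
        have h2 : 3 * M * B * u = 3 * M ^ 2 * (t * B) := by rw [hu]; ring
        have h3 : 3 * M ^ 2 * (t ^ 2 / 3 + 1) = u ^ 2 + 3 * M ^ 2 := by rw [hu]; ring
        have h4 : 3 * M * B * u < 3 * M ^ 2 + u ^ 2 := by linarith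
        have hApos : 0 < A := by linarith
        nlinarith
      rcases le_or_gt u (12/5) with hu24 | hu24
      · -- small u : use the cubic lower bound for coth
        have hAu : 45 + 15 * u ^ 2 - u ^ 4 < 45 * u * A := by
          have hc := lem_chi u hu0
          have h2 : (45 + 15 * u ^ 2 - u ^ 4) * Real.sinh u < 45 * u * A * Real.sinh u := by
            rw [mul_assoc, hAs]; linarith
          exact lt_of_mul_lt_mul_right h2 hsu.le
        set K := 45 + 15 * u ^ 2 - u ^ 4 with hK
        have hK0 : 0 < K := by
          rw [hK]
          nlinarith [mul_nonneg (mul_nonneg (by linarith : (0:ℝ) ≤ 12/5 - u)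
            (by linarith : (0:ℝ) ≤ 12/5 + u)) (sq_nonneg u)]
        have hstep3 : 45 * (3 * M ^ 2 + u ^ 2) ≤ 6 * M ^ 2 * K := by
          rw [hK]
          nlinarith [mul_nonneg (mul_nonneg (mul_nonneg (by linarith : (0:ℝ) ≤ 12/5 - u)
              (by linarith : (0:ℝ) ≤ 12/5 + u)) (sq_nonneg u)) (sq_nonneg M),
            mul_nonneg (by nlinarith : (0:ℝ) ≤ M^2 - 4) (sq_nonneg u), sq_nonneg M]
        have hR : 0 ≤ (540 * M ^ 2 - 675) + (45 - 90 * M ^ 2) * u ^ 2 + 3 * M ^ 2 * u ^ 4 := by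
          have hM4 : (0:ℝ) ≤ M ^ 2 - 4 := by nlinarith
          have hbase : (0:ℝ) ≤ 540 - 90 * u ^ 2 + 3 * u ^ 4 := by nlinarith [sq_nonneg (u^2 - 15)]
          have hN4 : (0:ℝ) ≤ 1485 - 315 * u ^ 2 + 12 * u ^ 4 := by
            nlinarith [sq_nonneg (u ^ 2 - 144/25), mul_nonneg (mul_nonneg
              (by linarith : (0:ℝ) ≤ 12/5 - u) (by linarith : (0:ℝ) ≤ 12/5 + u)) (sq_nonneg u)]
          nlinarith [mul_nonneg hM4 hbase]
        have hQ : 0 ≤ 3 * M ^ 2 * K ^ 2 - 45 * (3 * M ^ 2 + u ^ 2) * K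
            - 2025 * (M ^ 2 - 1) * u ^ 2 := by
          have heq : 3 * M ^ 2 * K ^ 2 - 45 * (3 * M ^ 2 + u ^ 2) * K - 2025 * (M ^ 2 - 1) * u ^ 2
              = u ^ 4 * ((540 * M ^ 2 - 675) + (45 - 90 * M ^ 2) * u ^ 2 + 3 * M ^ 2 * u ^ 4) := by
            rw [hK]; ring
          rw [heq]
          exact mul_nonneg (by positivity) hR
        have hfac : 0 < 3 * M ^ 2 * (45 * u * A + K) - 45 * (3 * M ^ 2 + u ^ 2) := by
          nlinarith [mul_pos (by positivity : (0:ℝ) < 3 * M ^ 2) (sub_pos.2 hAu)]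
        have hJz : 0 < 3 * M ^ 2 * (45 * u * A) ^ 2 - 45 * (3 * M ^ 2 + u ^ 2) * (45 * u * A)
            - 2025 * (M ^ 2 - 1) * u ^ 2 := by
          nlinarith [mul_pos (sub_pos.2 hAu) hfac, hQ]
        have hmid : (M ^ 2 - 1) * u ^ 2 < 3 * M ^ 2 * A ^ 2 * u ^ 2
            - A * u * (3 * M ^ 2 + u ^ 2) := by nlinarith [hJz]
        nlinarith [hmid, mul_lt_mul_of_pos_right hBu hu0, mul_pos hu0 hu0]
      · -- large u : crude bound suffices
        have hX0 : (M ^ 2 - 1) * u ≤ 3 * M ^ 2 * u - 3 * M ^ 2 - u ^ 2 := by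
          nlinarith [mul_nonneg (by linarith : (0:ℝ) ≤ u - 12/5) (by linarith : (0:ℝ) ≤ M - u)]
        have hApos : (0:ℝ) < A := by linarith
        have h5 : (M ^ 2 - 1) * u < A * (3 * M ^ 2 * u * A - 3 * M ^ 2 - u ^ 2) := by
          have hXpos : 0 < 3 * M ^ 2 * u - 3 * M ^ 2 - u ^ 2 := by nlinarith
          nlinarith [mul_pos (sub_pos.2 hA1) hXpos, hX0,
            mul_pos hApos (mul_pos (by positivity : (0:ℝ) < 3 * M ^ 2 * u) (sub_pos.2 hA1))]
        nlinarith [hBu, h5, hu0]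
  linarith

noncomputable def acosh (x : ℝ) : ℝ := Real.log (x + Real.sqrt (x ^ 2 - 1))

private lemma acosh_facts {x : ℝ} (hx : 1 < x) :
    0 < acosh x ∧ Real.cosh (acosh x) = x ∧ Real.sinh (acosh x) = Real.sqrt (x ^ 2 - 1) := by
  have hx2 : (0:ℝ) ≤ x ^ 2 - 1 := by nlinarith
  have hsq : Real.sqrt (x ^ 2 - 1) ^ 2 = x ^ 2 - 1 := Real.sq_sqrt hx2
  have hsnn : 0 ≤ Real.sqrt (x ^ 2 - 1) := Real.sqrt_nonneg _
  have hy1 : 1 < x + Real.sqrt (x ^ 2 - 1) := by linarith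
  have hy0 : 0 < x + Real.sqrt (x ^ 2 - 1) := by linarith
  have hinv : (x + Real.sqrt (x ^ 2 - 1))⁻¹ = x - Real.sqrt (x ^ 2 - 1) := by
    rw [inv_eq_iff_eq_inv, eq_comm, inv_eq_iff_eq_inv, eq_comm]
    · rw [eq_comm, inv_eq_of_mul_eq_one_right]
      nlinarith
  have hexp : Real.exp (acosh x) = x + Real.sqrt (x ^ 2 - 1) := Real.exp_log hy0
  have hexpneg : Real.exp (-acosh x) = x - Real.sqrt (x ^ 2 - 1) := by
    rw [Real.exp_neg, hexp, hinv]
  refine ⟨?_, ?_, ?_⟩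
  · rw [acosh]
    exact Real.log_pos hy1
  · rw [Real.cosh_eq, hexp, hexpneg]; ring
  · rw [Real.sinh_eq, hexp, hexpneg]; ring

private lemma T_eval_cosh (n : ℤ) (t : ℝ) :
    (Polynomial.Chebyshev.T ℝ n).eval (Real.cosh t) = Real.cosh ((n : ℝ) * t) := by
  have h := Polynomial.Chebyshev.T_complex_cos ((t : ℂ) * Complex.I) n
  rw [Complex.cos_mul_I] at h
  have hc : (Complex.cosh (t : ℂ)) = ((Real.cosh t : ℝ) : ℂ) := (Complex.ofReal_cosh t).symm
  rw [hc, ← Polynomial.Chebyshev.complex_ofReal_eval_T] at h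
  have h2 : (n : ℂ) * ((t : ℂ) * Complex.I) = (((n : ℝ) * t : ℝ) : ℂ) * Complex.I := by
    push_cast; ring
  rw [h2, Complex.cos_mul_I, ← Complex.ofReal_cosh] at h
  exact_mod_cast h

private lemma T_eval_acosh (n : ℤ) {x : ℝ} (hx : 1 < x) :
    (Polynomial.Chebyshev.T ℝ n).eval x = Real.cosh ((n : ℝ) * acosh x) := by
  obtain ⟨-, hc, -⟩ := acosh_facts hx
  rw [← hc, T_eval_cosh, hc]

private lemma acosh_hasDerivAt {x : ℝ} (hx : 1 < x) :
    HasDerivAt acosh (1 / Real.sqrt (x ^ 2 - 1)) x := by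
  have hx2 : (0:ℝ) < x ^ 2 - 1 := by nlinarith
  have hsp : 0 < Real.sqrt (x ^ 2 - 1) := Real.sqrt_pos.2 hx2
  have hsq : Real.sqrt (x ^ 2 - 1) ^ 2 = x ^ 2 - 1 := Real.sq_sqrt hx2.le
  have hy0 : 0 < x + Real.sqrt (x ^ 2 - 1) := by nlinarith
  have h1 : HasDerivAt (fun y : ℝ => y ^ 2 - 1) (2 * x) x := by
    have := (hasDerivAt_pow 2 x).sub_const 1
    refine this.congr_deriv ?_
    push_cast; ring
  have h2 : HasDerivAt (fun y : ℝ => Real.sqrt (y ^ 2 - 1)) (2 * x / (2 * Real.sqrt (x ^ 2 - 1))) x :=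
    h1.sqrt (by nlinarith)
  have h3 : HasDerivAt (fun y : ℝ => y + Real.sqrt (y ^ 2 - 1))
      (1 + 2 * x / (2 * Real.sqrt (x ^ 2 - 1))) x := (hasDerivAt_id' x).add h2
  have h4 := h3.log (by positivity)
  have h5 : (1 + 2 * x / (2 * Real.sqrt (x ^ 2 - 1))) / (x + Real.sqrt (x ^ 2 - 1))
      = 1 / Real.sqrt (x ^ 2 - 1) := by
    rw [div_eq_div_iff (by positivity) hsp.ne']
    field_simp
    nlinarith
  rw [← h5]
  exact h4

private lemma T_deriv_eval (n : ℤ) {x : ℝ} (hx : 1 < x) :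
    (Polynomial.derivative (Polynomial.Chebyshev.T ℝ n)).eval x
      = (n : ℝ) * Real.sinh ((n : ℝ) * acosh x) / Real.sqrt (x ^ 2 - 1) := by
  have hpoly := (Polynomial.Chebyshev.T ℝ n).hasDerivAt x
  have hG : HasDerivAt (fun y => Real.cosh ((n : ℝ) * acosh y))
      (Real.sinh ((n : ℝ) * acosh x) * ((n : ℝ) * (1 / Real.sqrt (x ^ 2 - 1)))) x :=
    ((acosh_hasDerivAt hx).const_mul (n : ℝ)).cosh
  have hEq : (fun y => (Polynomial.Chebyshev.T ℝ n).eval y)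
      =ᶠ[nhds x] (fun y => Real.cosh ((n : ℝ) * acosh y)) := by
    filter_upwards [isOpen_Ioi.mem_nhds (Set.mem_Ioi.2 hx)] with y hy
    exact T_eval_acosh n hy
  have hpoly' := hpoly.congr_of_eventuallyEq hEq.symm
  have := hpoly'.unique hG
  rw [this]; ring

private lemma T_dderiv_eval (n : ℤ) {x : ℝ} (hx : 1 < x) :
    (Polynomial.derivative (Polynomial.derivative (Polynomial.Chebyshev.T ℝ n))).eval x
      = ((n : ℝ) ^ 2 * Real.cosh ((n : ℝ) * acosh x) * Real.sqrt (x ^ 2 - 1)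
          - (n : ℝ) * x * Real.sinh ((n : ℝ) * acosh x)) / Real.sqrt (x ^ 2 - 1) ^ 3 := by
  have hx2 : (0:ℝ) < x ^ 2 - 1 := by nlinarith
  have hsp : 0 < Real.sqrt (x ^ 2 - 1) := Real.sqrt_pos.2 hx2
  have hpoly := (Polynomial.derivative (Polynomial.Chebyshev.T ℝ n)).hasDerivAt x
  have h1 : HasDerivAt (fun y : ℝ => y ^ 2 - 1) (2 * x) x := by
    have := (hasDerivAt_pow 2 x).sub_const 1
    refine this.congr_deriv ?_
    push_cast; ring
  have hSq : HasDerivAt (fun y : ℝ => Real.sqrt (y ^ 2 - 1))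
      (2 * x / (2 * Real.sqrt (x ^ 2 - 1))) x := h1.sqrt (by nlinarith)
  have hNum : HasDerivAt (fun y => (n : ℝ) * Real.sinh ((n : ℝ) * acosh y))
      ((n : ℝ) * (Real.cosh ((n : ℝ) * acosh x) * ((n : ℝ) * (1 / Real.sqrt (x ^ 2 - 1))))) x :=
    (((acosh_hasDerivAt hx).const_mul (n : ℝ)).sinh).const_mul (n : ℝ)
  have hG := hNum.div hSq hsp.ne'
  have hEq : (fun y => (Polynomial.derivative (Polynomial.Chebyshev.T ℝ n)).eval y)
      =ᶠ[nhds x] (fun y => (n : ℝ) * Real.sinh ((n : ℝ) * acosh y) / Real.sqrt (y ^ 2 - 1)) := by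
    filter_upwards [isOpen_Ioi.mem_nhds (Set.mem_Ioi.2 hx)] with y hy
    exact T_deriv_eval n hy
  have hpoly' := hpoly.congr_of_eventuallyEq hEq.symm
  have hval := hpoly'.unique hG
  rw [hval]
  set S := Real.sqrt (x ^ 2 - 1) with hS
  clear_value S
  rw [div_eq_div_iff (by positivity) (by positivity)]
  field_simp

open Polynomial Polynomial.Chebyshev

theorem stmt_17 (m : ℕ) (hm : 2 ≤ m) (ε : ℝ) (hε : 0 < ε) :
    1 / 3 * ((m : ℝ) ^ 2 - 1) / (m : ℝ) ^ 2 <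
        (T ℝ m).eval (1 + ε / (m : ℝ) ^ 2) *
            (derivative (derivative (T ℝ m))).eval (1 + ε / (m : ℝ) ^ 2) /
          ((derivative (T ℝ m)).eval (1 + ε / (m : ℝ) ^ 2)) ^ 2 ∧
      (T ℝ m).eval (1 + ε / (m : ℝ) ^ 2) *
            (derivative (derivative (T ℝ m))).eval (1 + ε / (m : ℝ) ^ 2) /
          ((derivative (T ℝ m)).eval (1 + ε / (m : ℝ) ^ 2)) ^ 2 <
        (1 / Real.tanh (Real.sqrt (2 * ε))) *
          (1 / Real.tanh (Real.sqrt (2 * ε)) - 1 / Real.sqrt (2 * ε)) := by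
  have hM : (2:ℝ) ≤ (m:ℝ) := by exact_mod_cast hm
  set M := (m : ℝ) with hMdef
  have hM0 : 0 < M := by linarith
  set x := 1 + ε / M ^ 2 with hxdef
  have hx1 : 1 < x := by
    rw [hxdef]
    have : 0 < ε / M ^ 2 := by positivity
    linarith
  obtain ⟨ht0, hct, hst⟩ := acosh_facts hx1
  set t := acosh x with htdef
  set s := Real.sqrt (2 * ε) with hsdef
  have hs0 : 0 < s := Real.sqrt_pos.2 (by linarith)
  have hs2 : s ^ 2 = 2 * ε := Real.sq_sqrt (by linarith)
  -- M * t < s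
  have hcq := lem_coshquad t ht0
  rw [hct] at hcq
  have hus : M * t < s := by
    have h1 : (M * t) ^ 2 < s ^ 2 := by
      rw [hs2]
      have hx' : x - 1 = ε / M ^ 2 := by rw [hxdef]; ring
      rw [hx'] at hcq
      have h2 : t ^ 2 / 2 < ε / M ^ 2 := by linarith
      have h3 : M ^ 2 * (t ^ 2 / 2) < M ^ 2 * (ε / M ^ 2) := by
        exact (mul_lt_mul_iff_right₀ (by positivity)).2 h2
      have h4 : M ^ 2 * (ε / M ^ 2) = ε := by field_simp
      nlinarith
    nlinarith [mul_pos hM0 ht0, hs0]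
  -- evaluate the Chebyshev polynomial and its derivatives
  have hT := T_eval_acosh (m : ℤ) hx1
  have hT' := T_deriv_eval (m : ℤ) hx1
  have hT'' := T_dderiv_eval (m : ℤ) hx1
  push_cast at hT hT' hT''
  rw [← htdef] at hT hT' hT''
  rw [← hMdef] at hT hT' hT''
  rw [← hst] at hT' hT''
  -- nonzero facts
  have hu0 : 0 < M * t := mul_pos hM0 ht0
  have hsu : 0 < Real.sinh (M * t) := Real.sinh_pos_iff.2 hu0
  have hstpos : 0 < Real.sinh t := Real.sinh_pos_iff.2 ht0
  have hcu : 0 < Real.cosh (M * t) := Real.cosh_pos (M * t)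
  have hαeq : (T ℝ (m:ℤ)).eval x * (derivative (derivative (T ℝ (m:ℤ)))).eval x
      / ((derivative (T ℝ (m:ℤ))).eval x) ^ 2
      = (Real.cosh (M * t) / Real.sinh (M * t)) ^ 2
        - (Real.cosh (M * t) / Real.sinh (M * t)) * (Real.cosh t / Real.sinh t) / M := by
    rw [hT, hT', hT'', hct]
    field_simp
  rw [hαeq]
  constructor
  · exact lem_lower hM ht0
  · -- upper bound
    have hB : 1 / t < Real.cosh t / Real.sinh t := by
      have hp := lem_phi t ht0
      rw [div_lt_div_iff₀ ht0 hstpos]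
      linarith
    have hApos : 0 < Real.cosh (M * t) / Real.sinh (M * t) := by positivity
    have step1 : (Real.cosh (M * t) / Real.sinh (M * t)) ^ 2
        - (Real.cosh (M * t) / Real.sinh (M * t)) * (Real.cosh t / Real.sinh t) / M
        < (Real.cosh (M * t) / Real.sinh (M * t)) ^ 2
        - (Real.cosh (M * t) / Real.sinh (M * t)) * (1 / t) / M := by
      have h1 : (Real.cosh (M * t) / Real.sinh (M * t)) * (1 / t)
          < (Real.cosh (M * t) / Real.sinh (M * t)) * (Real.cosh t / Real.sinh t) :=
        (mul_lt_mul_iff_right₀ hApos).2 hB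
      have h2 := (div_lt_div_iff_of_pos_right hM0).2 h1
      linarith [h2]
    have step2 : (Real.cosh (M * t) / Real.sinh (M * t)) ^ 2
        - (Real.cosh (M * t) / Real.sinh (M * t)) * (1 / t) / M
        = ((M * t) * Real.cosh (M * t) ^ 2 - Real.sinh (M * t) * Real.cosh (M * t))
          / ((M * t) * Real.sinh (M * t) ^ 2) := by
      field_simp
    have step3 := lem_F_mono hu0 hus
    have step4 : (s * Real.cosh s ^ 2 - Real.sinh s * Real.cosh s) / (s * Real.sinh s ^ 2)
        = 1 / Real.tanh s * (1 / Real.tanh s - 1 / s) := by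
      rw [Real.tanh_eq_sinh_div_cosh]
      have hss : 0 < Real.sinh s := Real.sinh_pos_iff.2 hs0
      have hcs : 0 < Real.cosh s := Real.cosh_pos s
      field_simp
    calc (Real.cosh (M * t) / Real.sinh (M * t)) ^ 2
        - (Real.cosh (M * t) / Real.sinh (M * t)) * (Real.cosh t / Real.sinh t) / M
        < ((M * t) * Real.cosh (M * t) ^ 2 - Real.sinh (M * t) * Real.cosh (M * t))
          / ((M * t) * Real.sinh (M * t) ^ 2) := by rw [← step2]; exact step1
      _ < (s * Real.cosh s ^ 2 - Real.sinh s * Real.cosh s) / (s * Real.sinh s ^ 2) := step3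
      _ = 1 / Real.tanh s * (1 / Real.tanh s - 1 / s) := step4
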